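/- Let k be a field and let I ⊆ k[x_1,...,x_n] be an ideal generated by binomials x^a − λ x^b (with λ ∈ k possibly zero). Then the reduced Gröbner basis of I with respect to any term order consists of binomials. -/

import Mathlib

open MvPolynomial

variable {k : Type*} [Field k] {n : ℕ}

/-- `a` is the leading monomial (exponent) of `f` with respect to the strict order `r`. -/
def IsLeadOf (r : (Fin n →₀ ℕ) → (Fin n →₀ ℕ) → Prop) (a : Fin n →₀ ℕ)
    (f : MvPolynomial (Fin n) k) : Prop :=
  a ∈ f.support ∧ ∀ b ∈ f.support, b ≠ a → r b a

/-- `G` is a reduced Gröbner basis of `I` with respect to the term order `r`:  its elements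
are nonzero members of `I`, their leading monomials divide the leading monomial of every
nonzero element of `I`, they are monic, and no monomial occurring in an element of `G` is
divisible by the leading monomial of a different element of `G`. -/
def IsReducedGroebnerBasis (r : (Fin n →₀ ℕ) → (Fin n →₀ ℕ) → Prop)
    (I : Ideal (MvPolynomial (Fin n) k)) (G : Finset (MvPolynomial (Fin n) k)) : Prop :=
  (∀ g ∈ G, g ∈ I ∧ g ≠ 0) ∧
  (∀ f ∈ I, f ≠ 0 → ∃ g ∈ G, ∃ a b : Fin n →₀ ℕ,
      IsLeadOf r a f ∧ IsLeadOf r b g ∧ ∃ c, a = b + c) ∧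
  (∀ g ∈ G, ∀ a : Fin n →₀ ℕ, IsLeadOf r a g → MvPolynomial.coeff a g = 1) ∧
  (∀ g ∈ G, ∀ g' ∈ G, g ≠ g' → ∀ a ∈ g.support, ∀ b : Fin n →₀ ℕ,
      IsLeadOf r b g' → ¬ ∃ c, a = b + c)

/-- The `k`-span of the binomials lying in `I` absorbs multiplication by `X i`. -/
lemma aux_Xmul (I : Ideal (MvPolynomial (Fin n) k)) (i : Fin n)
    (s : MvPolynomial (Fin n) k)
    (hs : s ∈ Submodule.span k {β : MvPolynomial (Fin n) k |
      β ∈ I ∧ ∃ (p q : Fin n →₀ ℕ) (l : k), β = monomial p 1 - C l * monomial q 1}) :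
    X i * s ∈ Submodule.span k {β : MvPolynomial (Fin n) k |
      β ∈ I ∧ ∃ (p q : Fin n →₀ ℕ) (l : k), β = monomial p 1 - C l * monomial q 1} := by
  induction hs using Submodule.span_induction with
  | mem x hx =>
    obtain ⟨hxI, p, q, l, rfl⟩ := hx
    apply Submodule.subset_span
    refine ⟨I.mul_mem_left _ hxI, Finsupp.single i 1 + p, Finsupp.single i 1 + q, l, ?_⟩
    rw [X, mul_sub, monomial_mul, one_mul, mul_left_comm, monomial_mul, one_mul]
  | zero => simp
  | add x y hx hy ihx ihy => rw [mul_add]; exact Submodule.add_mem _ ihx ihy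
  | smul c x hx ih => rw [mul_smul_comm]; exact Submodule.smul_mem _ _ ih

/-- The `k`-span of the binomials lying in `I` absorbs multiplication by polynomials. -/
lemma aux_mul (I : Ideal (MvPolynomial (Fin n) k)) (a : MvPolynomial (Fin n) k) :
    ∀ s ∈ Submodule.span k {β : MvPolynomial (Fin n) k |
      β ∈ I ∧ ∃ (p q : Fin n →₀ ℕ) (l : k), β = monomial p 1 - C l * monomial q 1},
    a * s ∈ Submodule.span k {β : MvPolynomial (Fin n) k |
      β ∈ I ∧ ∃ (p q : Fin n →₀ ℕ) (l : k), β = monomial p 1 - C l * monomial q 1} := by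
  induction a using MvPolynomial.induction_on with
  | C c => intro s hs; rw [← smul_eq_C_mul]; exact Submodule.smul_mem _ _ hs
  | add p q ihp ihq => intro s hs; rw [add_mul]; exact Submodule.add_mem _ (ihp s hs) (ihq s hs)
  | mul_X p i ih =>
    intro s hs
    rw [mul_assoc]
    exact ih _ (aux_Xmul I i s hs)

/-- A binomial ideal is spanned, as a `k`-vector space, by the binomials it contains. -/
lemma aux_span (I : Ideal (MvPolynomial (Fin n) k))
    (hbin : ∃ B : Set (MvPolynomial (Fin n) k), I = Ideal.span B ∧
      ∀ f ∈ B, ∃ (a b : Fin n →₀ ℕ) (l : k), f = monomial a 1 - C l * monomial b 1) :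
    ∀ f ∈ I, f ∈ Submodule.span k {β : MvPolynomial (Fin n) k |
      β ∈ I ∧ ∃ (p q : Fin n →₀ ℕ) (l : k), β = monomial p 1 - C l * monomial q 1} := by
  obtain ⟨B, hIB, hB⟩ := hbin
  intro f hf
  have hf' : f ∈ Ideal.span B := hIB ▸ hf
  induction hf' using Submodule.span_induction with
  | mem x hx =>
    apply Submodule.subset_span
    refine ⟨?_, hB x hx⟩
    rw [hIB]; exact Ideal.subset_span hx
  | zero => simp
  | add x y hx hy ihx ihy =>
    exact Submodule.add_mem _ (ihx (by rw [hIB]; exact hx)) (ihy (by rw [hIB]; exact hy))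
  | smul a x hx ih =>
    rw [smul_eq_mul]
    exact aux_mul I a x (ih (by rw [hIB]; exact hx))

/-- If an ideal `I ⊆ k[x₁,…,xₙ]` is generated by binomials `x^a − λ x^b` then any reduced
Gröbner basis of `I` with respect to any term order consists of binomials. -/
theorem stmt13 (r : (Fin n →₀ ℕ) → (Fin n →₀ ℕ) → Prop)
    [IsStrictTotalOrder (Fin n →₀ ℕ) r]
    (hadd : ∀ a b c : Fin n →₀ ℕ, r a b → r (a + c) (b + c))
    (hzero : ∀ a : Fin n →₀ ℕ, a ≠ 0 → r 0 a)
    (I : Ideal (MvPolynomial (Fin n) k))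
    (hbin : ∃ B : Set (MvPolynomial (Fin n) k), I = Ideal.span B ∧
      ∀ f ∈ B, ∃ (a b : Fin n →₀ ℕ) (l : k), f = monomial a 1 - C l * monomial b 1)
    (G : Finset (MvPolynomial (Fin n) k)) (hG : IsReducedGroebnerBasis r I G) :
    ∀ g ∈ G, ∃ (a b : Fin n →₀ ℕ) (l : k), g = monomial a 1 - C l * monomial b 1 := by
  classical
  obtain ⟨hGI, hdiv, hmonic, hred⟩ := hG
  have rirrefl : ∀ x, ¬ r x x := fun x => irrefl_of r x
  have rtrans : ∀ x y z, r x y → r y z → r x z := fun x y z => trans_of r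
  -- shorthand for irreducible monomials
  set Irre : (Fin n →₀ ℕ) → Prop :=
    fun m => ∀ g' ∈ G, ∀ b : Fin n →₀ ℕ, IsLeadOf r b g' → ¬ ∃ c, m = b + c with hIrre
  -- an element of I all of whose monomials are irreducible is 0
  have key : ∀ f ∈ I, (∀ m ∈ f.support, Irre m) → f = 0 := by
    intro f hf hirr
    by_contra h0
    obtain ⟨g', hg', a, b, ha, hb, c, hc⟩ := hdiv f hf h0
    exact hirr a ha.1 g' hg' b hb ⟨c, hc⟩
  -- a scalar multiple of an irreducible monomial in I must vanish
  have hmono : ∀ p : Fin n →₀ ℕ, Irre p → ∀ c : k,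
      (monomial p c : MvPolynomial (Fin n) k) ∈ I → c = 0 := by
    intro p hp c hc
    by_contra hc0
    have := key (monomial p c) hc (by
      intro m hm
      rw [support_monomial, if_neg hc0, Finset.mem_singleton] at hm
      exact hm ▸ hp)
    exact hc0 (monomial_eq_zero.mp this)
  -- a difference of two distinct irreducible monomials in I must vanish
  have hpairkey : ∀ p q : Fin n →₀ ℕ, Irre p → Irre q → p ≠ q → ∀ c d : k,
      (monomial p c - monomial q d : MvPolynomial (Fin n) k) ∈ I → c = 0 := by
    intro p q hp hq hpq c d hmem
    have h0 := key _ hmem (by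
      intro m hm
      have := MvPolynomial.support_sub (Fin n) (monomial p c) (monomial q d) hm
      rcases Finset.mem_union.mp this with h | h
      · exact (Finset.mem_singleton.mp (support_monomial_subset h)) ▸ hp
      · exact (Finset.mem_singleton.mp (support_monomial_subset h)) ▸ hq)
    have := congrArg (coeff p) h0
    rwa [coeff_sub, coeff_monomial, coeff_monomial, if_pos rfl, if_neg (Ne.symm hpq),
      coeff_zero, sub_zero] at this
  intro g hg
  obtain ⟨hgI, hg0⟩ := hGI g hg
  -- the leading monomial of g
  obtain ⟨g', hg', a, b, hla, hlb, c, hc⟩ := hdiv g hgI hg0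
  -- every non-leading monomial of g is irreducible
  have hirr : ∀ m ∈ g.support, m ≠ a → Irre m := by
    rintro m hm hma g'' hg'' b' hlb' ⟨c', hc'⟩
    by_cases hgg : g'' = g
    · subst hgg
      have hba : b' = a := by
        by_contra hne
        exact rirrefl _ (rtrans _ _ _ (hla.2 b' hlb'.1 hne) (hlb'.2 a hla.1 (Ne.symm hne)))
      subst hba
      have hc0 : c' ≠ 0 := by rintro rfl; rw [add_zero] at hc'; exact hma hc'
      have h1 : r b' m := by
        have := hadd 0 c' b' (hzero c' hc0)
        rw [zero_add, add_comm] at this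
        exact hc' ▸ this
      exact rirrefl _ (rtrans _ _ _ h1 (hla.2 m hm hma))
    · exact hred g hg g'' hg'' (fun h => hgg h.symm) m hm b' hlb' ⟨c', hc'⟩
  -- the tail of g
  set f : MvPolynomial (Fin n) k := monomial a 1 - g with hf
  have hcoefa : coeff a g = 1 := hmonic g hg a hla
  have hgf : g = monomial a 1 - f := by rw [hf, sub_sub_cancel]
  have hfsupp : ∀ m ∈ f.support, m ∈ g.support ∧ m ≠ a := by
    intro m hm
    rw [mem_support_iff] at hm
    by_cases hma : m = a
    · exact absurd (by rw [hf, coeff_sub, hma, coeff_monomial, if_pos rfl, hcoefa, sub_self]) hm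
    · refine ⟨mem_support_iff.mpr fun h0 => hm ?_, hma⟩
      rw [hf, coeff_sub, coeff_monomial, if_neg (Ne.symm hma), h0, zero_sub, neg_zero]
  have hfirr : ∀ m ∈ f.support, Irre m := fun m hm => hirr m (hfsupp m hm).1 (hfsupp m hm).2
  -- for every monomial p1 of the tail there is a nonzero c with x^a - c x^{p1} ∈ I
  have hbase : ∀ p1 ∈ f.support, ∃ c : k, c ≠ 0 ∧
      (monomial a 1 - C c * monomial p1 1 : MvPolynomial (Fin n) k) ∈ I := by
    intro p1 hp1
    have hip1 : Irre p1 := hfirr p1 hp1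
    have hp1I : ∀ c : k, (monomial p1 c : MvPolynomial (Fin n) k) ∈ I → c = 0 := hmono p1 hip1
    -- the coefficient function μ relative to the base monomial p1
    set μ : (Fin n →₀ ℕ) → k := fun p =>
      if h : ∃ c : k, (monomial p 1 - C c * monomial p1 1 : MvPolynomial (Fin n) k) ∈ I
      then h.choose else 0 with hμ
    have hμmem : ∀ p : Fin n →₀ ℕ,
        (∃ c : k, (monomial p 1 - C c * monomial p1 1 : MvPolynomial (Fin n) k) ∈ I) →
        (monomial p 1 - C (μ p) * monomial p1 1 : MvPolynomial (Fin n) k) ∈ I := by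
      intro p hp
      simp only [hμ, dif_pos hp]
      exact hp.choose_spec
    have hμ0 : ∀ p : Fin n →₀ ℕ,
        ¬ (∃ c : k, (monomial p 1 - C c * monomial p1 1 : MvPolynomial (Fin n) k) ∈ I) →
        μ p = 0 := by
      intro p hp
      simp only [hμ, dif_neg hp]
    have hμuniq : ∀ (p : Fin n →₀ ℕ) (c : k),
        (monomial p 1 - C c * monomial p1 1 : MvPolynomial (Fin n) k) ∈ I → μ p = c := by
      intro p c hmemc
      have h1 := hμmem p ⟨c, hmemc⟩
      have h2 := I.sub_mem h1 hmemc
      have heq : (monomial p 1 - C (μ p) * monomial p1 1) - (monomial p 1 - C c * monomial p1 1)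
          = (monomial p1 (c - μ p) : MvPolynomial (Fin n) k) := by
        rw [sub_sub_sub_cancel_left, C_mul_monomial, C_mul_monomial, mul_one, mul_one,
          ← map_sub]
      rw [heq] at h2
      exact (sub_eq_zero.mp (hp1I _ h2)).symm
    -- μ turns binomials of I into equations
    have hμmul : ∀ (p q : Fin n →₀ ℕ) (l : k),
        (monomial p 1 - C l * monomial q 1 : MvPolynomial (Fin n) k) ∈ I → μ p = l * μ q := by
      intro p q l hmem
      by_cases hq : ∃ c : k, (monomial q 1 - C c * monomial p1 1 : MvPolynomial (Fin n) k) ∈ I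
      · have hq' := hμmem q hq
        have h3 := I.add_mem hmem (I.mul_mem_left (C l) hq')
        have heq : (monomial p 1 - C l * monomial q 1)
            + C l * (monomial q 1 - C (μ q) * monomial p1 1)
            = (monomial p 1 - C (l * μ q) * monomial p1 1 : MvPolynomial (Fin n) k) := by
          rw [map_mul]; ring
        rw [heq] at h3
        exact hμuniq p _ h3
      · rw [hμ0 q hq, mul_zero]
        by_cases hp : ∃ c : k, (monomial p 1 - C c * monomial p1 1 : MvPolynomial (Fin n) k) ∈ I
        · by_cases hl : l = 0
          · apply hμuniq p 0
            rw [map_zero, zero_mul, sub_zero]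
            have : (monomial p 1 : MvPolynomial (Fin n) k)
                = monomial p 1 - C l * monomial q 1 := by rw [hl, map_zero, zero_mul, sub_zero]
            rw [this]; exact hmem
          · exfalso
            apply hq
            refine ⟨μ p * l⁻¹, ?_⟩
            have h4 := I.sub_mem (hμmem p hp) hmem
            have h5 := I.mul_mem_left (C l⁻¹) h4
            have heq : C l⁻¹ * ((monomial p 1 - C (μ p) * monomial p1 1)
                - (monomial p 1 - C l * monomial q 1))
                = (monomial q 1 - C (μ p * l⁻¹) * monomial p1 1 : MvPolynomial (Fin n) k) := by
              rw [sub_sub_sub_cancel_left, mul_sub, ← mul_assoc, ← map_mul,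
                inv_mul_cancel₀ hl, map_one, one_mul, ← mul_assoc, ← map_mul,
                mul_comm l⁻¹ (μ p)]
            rw [heq] at h5
            exact h5
        · exact hμ0 p hp
    -- the linear functional T
    set T : MvPolynomial (Fin n) k → k := fun u => Finsupp.sum (AddMonoidAlgebra.coeff u) fun p c => c * μ p with hT
    have hTmon : ∀ (p : Fin n →₀ ℕ) (c : k), T (monomial p c) = c * μ p := by
      intro p c
      rw [hT]
      exact Finsupp.sum_single_index (zero_mul _)
    have hTadd : ∀ u v : MvPolynomial (Fin n) k, T (u + v) = T u + T v := by
      intro u v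
      rw [hT]
      exact Finsupp.sum_add_index' (fun p => zero_mul _) (fun p b1 b2 => add_mul b1 b2 _)
    have hTcoe : ∀ u : MvPolynomial (Fin n) k, T u = ∑ m ∈ u.support, coeff m u * μ m := by
      intro u
      rw [hT]
      exact MvPolynomial.sum_def
    have hTsmul : ∀ (c : k) (u : MvPolynomial (Fin n) k), T (c • u) = c * T u := by
      intro c u
      rw [hTcoe, hTcoe, Finset.mul_sum]
      rw [Finset.sum_subset (MvPolynomial.support_smul (a := c) (f := u))
        (fun m _ hm => by rw [notMem_support_iff.mp hm, zero_mul])]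
      refine Finset.sum_congr rfl fun m _ => ?_
      rw [coeff_smul, smul_eq_mul, mul_assoc]
    have hTsub : ∀ u v : MvPolynomial (Fin n) k, T (u - v) = T u - T v := by
      intro u v
      have hneg : T (-v) = -T v := by
        have h1 : -v = (-1 : k) • v := by rw [neg_one_smul]
        rw [h1, hTsmul, neg_one_mul]
      rw [sub_eq_add_neg, hTadd, hneg, sub_eq_add_neg]
    -- T vanishes on I
    have hTI : ∀ u ∈ I, T u = 0 := by
      intro u hu
      have hu' := aux_span I hbin u hu
      clear hu
      induction hu' using Submodule.span_induction with
      | mem x hx =>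
        obtain ⟨hxI, p, q, l, rfl⟩ := hx
        rw [hTsub, hTmon, C_mul_monomial, mul_one, hTmon, one_mul,
          hμmul p q l hxI, mul_comm, sub_self]
      | zero => rw [hTcoe]; simp
      | add x y hx hy ihx ihy => rw [hTadd, ihx, ihy, add_zero]
      | smul cc x hx ih => rw [hTsmul, ih, mul_zero]
    -- values of μ
    have hμp1 : μ p1 = 1 := by
      apply hμuniq p1 1
      rw [C_mul_monomial, one_mul, sub_self]
      exact I.zero_mem
    have hμirr : ∀ p : Fin n →₀ ℕ, Irre p → p ≠ p1 → μ p = 0 := by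
      intro p hp hne
      by_cases hex : ∃ c : k, (monomial p 1 - C c * monomial p1 1 : MvPolynomial (Fin n) k) ∈ I
      · exfalso
        have hm := hμmem p hex
        rw [C_mul_monomial, mul_one] at hm
        exact one_ne_zero (hpairkey p p1 hp hip1 hne 1 (μ p) hm)
      · exact hμ0 p hex
    -- computing T on the tail of g
    have hTf : T f = coeff p1 f := by
      rw [hTcoe]
      have hcong : ∀ m ∈ f.support, coeff m f * μ m = if m = p1 then coeff p1 f else 0 := by
        intro m hm
        by_cases hmp : m = p1
        · rw [if_pos hmp, hmp, hμp1, mul_one]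
        · rw [if_neg hmp, hμirr m (hfirr m hm) hmp, mul_zero]
      rw [Finset.sum_congr rfl hcong, Finset.sum_ite_eq' f.support p1 (fun _ => coeff p1 f)]
      exact if_pos hp1
    have hTg := hTI g hgI
    rw [hgf, hTsub, hTmon, one_mul, hTf] at hTg
    have hca : μ a = coeff p1 f := sub_eq_zero.mp hTg
    have hcne : coeff p1 f ≠ 0 := mem_support_iff.mp hp1
    have hex : ∃ c : k, (monomial a 1 - C c * monomial p1 1 : MvPolynomial (Fin n) k) ∈ I := by
      by_contra hexn
      exact hcne (by rw [← hca, hμ0 a hexn])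
    exact ⟨μ a, by rw [hca]; exact hcne, hμmem a hex⟩
  -- the tail has at most one monomial
  have huniq : ∀ p1 ∈ f.support, ∀ p2 ∈ f.support, p1 = p2 := by
    intro p1 hp1 p2 hp2
    by_contra hne
    obtain ⟨c1, hc1, hm1⟩ := hbase p1 hp1
    obtain ⟨c2, hc2, hm2⟩ := hbase p2 hp2
    have h6 := I.sub_mem hm2 hm1
    have heq : (monomial a 1 - C c2 * monomial p2 1) - (monomial a 1 - C c1 * monomial p1 1)
        = (monomial p1 c1 - monomial p2 c2 : MvPolynomial (Fin n) k) := by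
      rw [sub_sub_sub_cancel_left, C_mul_monomial, C_mul_monomial, mul_one, mul_one]
    rw [heq] at h6
    exact hc1 (hpairkey p1 p2 (hfirr _ hp1) (hfirr _ hp2) hne c1 c2 h6)
  by_cases hfe : f.support = ∅
  · refine ⟨a, 0, 0, ?_⟩
    rw [map_zero, zero_mul, sub_zero, hgf, support_eq_empty.mp hfe, sub_zero]
  · obtain ⟨b0, hb0⟩ := Finset.nonempty_iff_ne_empty.mpr hfe
    obtain ⟨c0, hc0⟩ : ∃ c0, coeff b0 f = c0 := ⟨_, rfl⟩
    refine ⟨a, b0, c0, ?_⟩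
    have hfeq : f = monomial b0 c0 := by
      apply MvPolynomial.ext
      intro m
      rw [coeff_monomial]
      by_cases hm : b0 = m
      · rw [if_pos hm, ← hm, hc0]
      · rw [if_neg hm]
        by_contra hcm
        exact hm (huniq b0 hb0 m (mem_support_iff.mpr hcm))
    rw [hgf, hfeq, C_mul_monomial, mul_one]
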